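/- arXiv:1504.02122 — 2 statements merged into one kernel-verified Lean document; each statement's English description precedes it below -/
import Mathlib

section
/- Every 3-tree G of maximum degree at most 5 is isomorphic to one of exactly four graphs: K4; K5 minus one edge; or one of the two 6-vertex 3-trees obtained from K5 minus an edge by adding a new vertex joined to a triangle. -/
open SimpleGraph Sum

/-- Two edges of `G` are adjacent if they are distinct edges sharing a vertex. -/
def EdgeAdj {V : Type*} (G : SimpleGraph V) (e f : Sym2 V) : Prop :=
  e ∈ G.edgeSet ∧ f ∈ G.edgeSet ∧ e ≠ f ∧ ∃ v, v ∈ e ∧ v ∈ f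

/-- A proper edge-colouring of `G` choosing each edge's colour from its list. -/
def IsListEdgeColoring {V : Type*} (G : SimpleGraph V) (L : Sym2 V → Finset ℕ)
    (C : Sym2 V → ℕ) : Prop :=
  (∀ e ∈ G.edgeSet, C e ∈ L e) ∧ ∀ e f, EdgeAdj G e f → C e ≠ C f
/-- `G` is a 3-tree: there is a construction ordering `σ 0, σ 1, …` in which the
first four vertices form a `K₄` and each later vertex has exactly three earlier
neighbours, which form a triangle. -/
def Is3Tree {n : ℕ} (G : SimpleGraph (Fin n)) : Prop :=
  4 ≤ n ∧ ∃ σ : Equiv.Perm (Fin n),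
    (∀ i j : Fin n, i < j → (j : ℕ) < 4 → G.Adj (σ i) (σ j)) ∧
    ∀ j : Fin n, 4 ≤ (j : ℕ) →
      ({i : Fin n | i < j ∧ G.Adj (σ i) (σ j)}.ncard = 3 ∧
       ∀ i i' : Fin n, i < j → i' < j → i ≠ i' →
         G.Adj (σ i) (σ j) → G.Adj (σ i') (σ j) → G.Adj (σ i) (σ i'))

/-- `K₄`. -/
def Ga : SimpleGraph (Fin 4) := ⊤

/-- `K₅` minus one edge. -/
def Gb : SimpleGraph (Fin 5) := (⊤ : SimpleGraph (Fin 5)).deleteEdges {s((3 : Fin 5), 4)}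

/-- `K₅` minus an edge, plus a new vertex joined to the triangle `{0,1,2}`. -/
def Gc : SimpleGraph (Fin 6) :=
  SimpleGraph.fromEdgeSet
    ({e | ∃ i j : Fin 6, (i : ℕ) < 5 ∧ (j : ℕ) < 5 ∧ i ≠ j ∧ e ≠ s((3 : Fin 6), 4) ∧ e = s(i, j)} ∪
     {s((5 : Fin 6), 0), s((5 : Fin 6), 1), s((5 : Fin 6), 2)})

/-- `K₅` minus an edge, plus a new vertex joined to the triangle `{0,2,3}`. -/
def Gd : SimpleGraph (Fin 6) :=
  SimpleGraph.fromEdgeSet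
    ({e | ∃ i j : Fin 6, (i : ℕ) < 5 ∧ (j : ℕ) < 5 ∧ i ≠ j ∧ e ≠ s((3 : Fin 6), 4) ∧ e = s(i, j)} ∪
     {s((5 : Fin 6), 0), s((5 : Fin 6), 2), s((5 : Fin 6), 3)})

/- ### Auxiliary development -/

def bg (n : ℕ) (S : ℕ → Finset ℕ) : SimpleGraph (Fin n) :=
  SimpleGraph.fromRel (fun i j => (i : ℕ) < j ∧ ((j : ℕ) < 4 ∨ (i : ℕ) ∈ S j))

instance (n : ℕ) (S : ℕ → Finset ℕ) : DecidableRel (bg n S).Adj := fun a b =>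
  decidable_of_iff _ (SimpleGraph.fromRel_adj _ a b).symm

lemma bg_adj {n : ℕ} {S : ℕ → Finset ℕ} {a b : Fin n} :
    (bg n S).Adj a b ↔ a ≠ b ∧
      (((a : ℕ) < b ∧ ((b : ℕ) < 4 ∨ (a : ℕ) ∈ S b)) ∨
       ((b : ℕ) < a ∧ ((a : ℕ) < 4 ∨ (b : ℕ) ∈ S a))) :=
  SimpleGraph.fromRel_adj _ a b

lemma bg_congr {n : ℕ} {S S' : ℕ → Finset ℕ}
    (h : ∀ j, 4 ≤ j → j < n → S j = S' j) : bg n S = bg n S' := by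
  have key : ∀ x y : Fin n, ((x : ℕ) < y ∧ ((y : ℕ) < 4 ∨ (x : ℕ) ∈ S y)) ↔
      ((x : ℕ) < y ∧ ((y : ℕ) < 4 ∨ (x : ℕ) ∈ S' y)) := by
    intro x y
    by_cases h4 : (y : ℕ) < 4
    · simp [h4]
    · rw [h y (by omega) y.isLt]
  ext a b
  rw [bg_adj, bg_adj, key, key]

/-- the canonical-ordering 3-tree property -/
def Canon {n : ℕ} (G : SimpleGraph (Fin n)) : Prop :=
  (∀ i j : Fin n, i < j → (j : ℕ) < 4 → G.Adj i j) ∧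
  ∀ j : Fin n, 4 ≤ (j : ℕ) →
    ({i : Fin n | i < j ∧ G.Adj i j}.ncard = 3 ∧
     ∀ i i' : Fin n, i < j → i' < j → i ≠ i' → G.Adj i j → G.Adj i' j → G.Adj i i')

noncomputable def nbrS {n : ℕ} (G : SimpleGraph (Fin n)) : ℕ → Finset ℕ := fun m =>
  if h : m < n then
    ((Set.toFinite {i : Fin n | i < ⟨m, h⟩ ∧ G.Adj i ⟨m, h⟩}).toFinset).image Fin.val
  else ∅

lemma mem_nbrS {n : ℕ} {G : SimpleGraph (Fin n)} {m a : ℕ} (hm : m < n) (ha : a < n) :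
    a ∈ nbrS G m ↔ a < m ∧ G.Adj ⟨a, ha⟩ ⟨m, hm⟩ := by
  simp only [nbrS, dif_pos hm, Finset.mem_image, Set.Finite.mem_toFinset, Set.mem_setOf_eq]
  constructor
  · rintro ⟨i, ⟨hlt, hadj⟩, rfl⟩
    exact ⟨hlt, by simpa [Fin.eta] using hadj⟩
  · rintro ⟨hlt, hadj⟩
    exact ⟨⟨a, ha⟩, ⟨hlt, hadj⟩, rfl⟩

lemma nbrS_subset_range {n : ℕ} (G : SimpleGraph (Fin n)) (m : ℕ) :
    nbrS G m ⊆ Finset.range m := by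
  intro a ha
  rw [Finset.mem_range]
  unfold nbrS at ha
  split at ha
  · simp only [Finset.mem_image, Set.Finite.mem_toFinset, Set.mem_setOf_eq] at ha
    obtain ⟨i, ⟨hlt, _⟩, rfl⟩ := ha
    exact hlt
  · simp at ha

lemma bridge_eq {n : ℕ} {G : SimpleGraph (Fin n)} (hc : Canon G) : G = bg n (nbrS G) := by
  have key : ∀ a b : Fin n, a < b → (G.Adj a b ↔ (bg n (nbrS G)).Adj a b) := by
    intro a b hab
    have hab' : (a : ℕ) < b := hab
    rw [bg_adj]
    constructor
    · intro h
      refine ⟨Fin.ne_of_lt hab, Or.inl ⟨hab', Or.inr ?_⟩⟩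
      rw [mem_nbrS b.isLt a.isLt]
      exact ⟨hab', by simpa [Fin.eta] using h⟩
    · rintro ⟨hne, ⟨_, h4 | hmem⟩ | ⟨hba, _⟩⟩
      · exact hc.1 a b hab h4
      · rw [mem_nbrS b.isLt a.isLt] at hmem
        simpa [Fin.eta] using hmem.2
      · omega
  ext a b
  rcases lt_trichotomy a b with h | h | h
  · exact key a b h
  · subst h; simp [SimpleGraph.irrefl]
  · rw [G.adj_comm, (bg n (nbrS G)).adj_comm]
    exact key b a h

lemma nbrS_card {n : ℕ} {G : SimpleGraph (Fin n)} (hc : Canon G) {m : ℕ}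
    (h4 : 4 ≤ m) (hm : m < n) : (nbrS G m).card = 3 := by
  have := (hc.2 ⟨m, hm⟩ h4).1
  rw [Set.ncard_eq_toFinset_card _ (Set.toFinite _)] at this
  rw [← this]
  unfold nbrS
  rw [dif_pos hm]
  exact Finset.card_image_of_injective _ Fin.val_injective

lemma nbrS_clique {n : ℕ} {G : SimpleGraph (Fin n)} (hc : Canon G) {m : ℕ}
    (h4 : 4 ≤ m) (hm : m < n) :
    ∀ a ∈ nbrS G m, ∀ b ∈ nbrS G m, a < b → (b < 4 ∨ a ∈ nbrS G b) := by
  intro a ha b hb hab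
  have ham : a < m := by simpa using nbrS_subset_range G m ha
  have hbm : b < m := by simpa using nbrS_subset_range G m hb
  have ha' : a < n := lt_trans ham hm
  have hb' : b < n := lt_trans hbm hm
  rw [mem_nbrS hm ha'] at ha
  rw [mem_nbrS hm hb'] at hb
  have hadj : G.Adj ⟨a, ha'⟩ ⟨b, hb'⟩ := by
    refine (hc.2 ⟨m, hm⟩ h4).2 ⟨a, ha'⟩ ⟨b, hb'⟩ ham hbm ?_ ha.2 hb.2
    exact fun h => absurd (congrArg Fin.val h) (by simp; omega)
  by_cases h4b : b < 4
  · exact Or.inl h4b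
  · right
    rw [mem_nbrS hb' ha']
    exact ⟨hab, hadj⟩

def cert5 (s : Finset ℕ) : Fin 5 → Fin 5 :=
  if s = ({0,1,2} : Finset ℕ) then ![0,1,2,3,4] else
  if s = ({0,1,3} : Finset ℕ) then ![0,1,3,2,4] else
  if s = ({0,2,3} : Finset ℕ) then ![0,3,1,2,4] else
  ![3,0,1,2,4]

def Sb : ℕ → Finset ℕ := fun j => if j = 4 then {0,1,2} else ∅
def Sc : ℕ → Finset ℕ := fun j => if j = 4 then {0,1,2} else if j = 5 then {0,1,2} else ∅
def Sd : ℕ → Finset ℕ := fun j => if j = 4 then {0,1,2} else if j = 5 then {0,2,3} else ∅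

theorem L5 : ∀ s ∈ (Finset.range 4).powersetCard 3,
    Function.Bijective (cert5 s) ∧
    ∀ i j : Fin 5, (bg 5 (fun m => if m = 4 then s else ∅)).Adj i j ↔
      (bg 5 Sb).Adj (cert5 s i) (cert5 s j) := by decide
def cert6 (s t : Finset ℕ) : Bool × (Fin 6 → Fin 6) :=
  if s = ({0,1,2} : Finset ℕ) ∧ t = ({0,1,2} : Finset ℕ) then (true, ![0,1,2,3,4,5]) else
  if s = ({0,1,2} : Finset ℕ) ∧ t = ({0,1,3} : Finset ℕ) then (false, ![0,2,1,3,4,5]) else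
  if s = ({0,1,2} : Finset ℕ) ∧ t = ({0,1,4} : Finset ℕ) then (false, ![0,2,1,4,3,5]) else
  if s = ({0,1,2} : Finset ℕ) ∧ t = ({0,2,3} : Finset ℕ) then (false, ![0,1,2,3,4,5]) else
  if s = ({0,1,2} : Finset ℕ) ∧ t = ({0,2,4} : Finset ℕ) then (false, ![0,1,2,4,3,5]) else
  if s = ({0,1,2} : Finset ℕ) ∧ t = ({1,2,3} : Finset ℕ) then (false, ![1,0,2,3,4,5]) else
  if s = ({0,1,2} : Finset ℕ) ∧ t = ({1,2,4} : Finset ℕ) then (false, ![1,0,2,4,3,5]) else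
  if s = ({0,1,3} : Finset ℕ) ∧ t = ({0,1,2} : Finset ℕ) then (false, ![0,2,1,3,5,4]) else
  if s = ({0,1,3} : Finset ℕ) ∧ t = ({0,1,3} : Finset ℕ) then (true, ![0,1,3,2,4,5]) else
  if s = ({0,1,3} : Finset ℕ) ∧ t = ({0,1,4} : Finset ℕ) then (false, ![0,2,4,1,3,5]) else
  if s = ({0,1,3} : Finset ℕ) ∧ t = ({0,2,3} : Finset ℕ) then (false, ![0,1,3,2,4,5]) else
  if s = ({0,1,3} : Finset ℕ) ∧ t = ({0,3,4} : Finset ℕ) then (false, ![0,1,4,2,3,5]) else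
  if s = ({0,1,3} : Finset ℕ) ∧ t = ({1,2,3} : Finset ℕ) then (false, ![1,0,3,2,4,5]) else
  if s = ({0,1,3} : Finset ℕ) ∧ t = ({1,3,4} : Finset ℕ) then (false, ![1,0,4,2,3,5]) else
  if s = ({0,2,3} : Finset ℕ) ∧ t = ({0,1,2} : Finset ℕ) then (false, ![0,1,2,3,5,4]) else
  if s = ({0,2,3} : Finset ℕ) ∧ t = ({0,1,3} : Finset ℕ) then (false, ![0,1,3,2,5,4]) else
  if s = ({0,2,3} : Finset ℕ) ∧ t = ({0,2,3} : Finset ℕ) then (true, ![0,3,1,2,4,5]) else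
  if s = ({0,2,3} : Finset ℕ) ∧ t = ({0,2,4} : Finset ℕ) then (false, ![0,4,2,1,3,5]) else
  if s = ({0,2,3} : Finset ℕ) ∧ t = ({0,3,4} : Finset ℕ) then (false, ![0,4,1,2,3,5]) else
  if s = ({0,2,3} : Finset ℕ) ∧ t = ({1,2,3} : Finset ℕ) then (false, ![1,3,0,2,4,5]) else
  if s = ({0,2,3} : Finset ℕ) ∧ t = ({2,3,4} : Finset ℕ) then (false, ![1,4,0,2,3,5]) else
  if s = ({1,2,3} : Finset ℕ) ∧ t = ({0,1,2} : Finset ℕ) then (false, ![1,0,2,3,5,4]) else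
  if s = ({1,2,3} : Finset ℕ) ∧ t = ({0,1,3} : Finset ℕ) then (false, ![1,0,3,2,5,4]) else
  if s = ({1,2,3} : Finset ℕ) ∧ t = ({0,2,3} : Finset ℕ) then (false, ![1,3,0,2,5,4]) else
  if s = ({1,2,3} : Finset ℕ) ∧ t = ({1,2,3} : Finset ℕ) then (true, ![3,0,1,2,4,5]) else
  if s = ({1,2,3} : Finset ℕ) ∧ t = ({1,2,4} : Finset ℕ) then (false, ![4,0,2,1,3,5]) else
  if s = ({1,2,3} : Finset ℕ) ∧ t = ({1,3,4} : Finset ℕ) then (false, ![4,0,1,2,3,5]) else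
  (false, ![4,1,0,2,3,5])


theorem L6 : ∀ s ∈ (Finset.range 4).powersetCard 3, ∀ t ∈ (Finset.range 5).powersetCard 3,
    (∀ a ∈ t, ∀ b ∈ t, a < b → (b < 4 ∨ a ∈ s)) →
    Function.Bijective (cert6 s t).2 ∧
    ∀ i j : Fin 6, (bg 6 (fun m => if m = 4 then s else if m = 5 then t else ∅)).Adj i j ↔
      (bg 6 (if (cert6 s t).1 then Sc else Sd)).Adj ((cert6 s t).2 i) ((cert6 s t).2 j) := by
  decide

theorem L7 : ∀ s ∈ (Finset.range 4).powersetCard 3, ∀ t ∈ (Finset.range 5).powersetCard 3,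
    ∀ u ∈ (Finset.range 6).powersetCard 3,
    (∀ a ∈ t, ∀ b ∈ t, a < b → (b < 4 ∨ a ∈ s)) →
    (∀ a ∈ u, ∀ b ∈ u, a < b → (b < 4 ∨ a ∈ (if b = 4 then s else t))) →
    ∃ v : Fin 7, 6 ≤ (Finset.univ.filter fun w =>
      (bg 7 (fun m => if m = 4 then s else if m = 5 then t
        else if m = 6 then u else ∅)).Adj v w).card := by
  decide

/- graph identifications -/

lemma ga_eq (S : ℕ → Finset ℕ) : bg 4 S = Ga := by
  ext a b
  rw [bg_adj]
  simp only [Ga, SimpleGraph.top_adj]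
  constructor
  · exact fun h => h.1
  · intro h
    refine ⟨h, ?_⟩
    have : (a : ℕ) ≠ (b : ℕ) := fun hh => h (Fin.val_injective hh)
    have hb : (b : ℕ) < 4 := b.isLt
    have ha : (a : ℕ) < 4 := a.isLt
    rcases Nat.lt_or_ge (a : ℕ) (b : ℕ) with hlt | hge
    · exact Or.inl ⟨hlt, Or.inl hb⟩
    · exact Or.inr ⟨by omega, Or.inl ha⟩

lemma gb_eq : Gb = bg 5 Sb := by
  ext a b
  rw [bg_adj]
  simp only [Gb, SimpleGraph.deleteEdges_adj, SimpleGraph.top_adj, Set.mem_singleton_iff]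
  fin_cases a <;> fin_cases b <;> simp [Sb, Sym2.eq_iff] <;> decide

lemma gc_eq : Gc = bg 6 Sc := by
  ext a b
  rw [bg_adj]
  simp only [Gc, SimpleGraph.fromEdgeSet_adj, Set.mem_union, Set.mem_setOf_eq,
    Set.mem_insert_iff, Set.mem_singleton_iff]
  fin_cases a <;> fin_cases b <;> simp [Sc, Sym2.eq_iff] <;> decide

lemma gd_eq : Gd = bg 6 Sd := by
  ext a b
  rw [bg_adj]
  simp only [Gd, SimpleGraph.fromEdgeSet_adj, Set.mem_union, Set.mem_setOf_eq,
    Set.mem_insert_iff, Set.mem_singleton_iff]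
  fin_cases a <;> fin_cases b <;> simp [Sd, Sym2.eq_iff] <;> decide

/- iso helpers -/

lemma ncard_ns_iso {V W : Type*} {A : SimpleGraph V} {B : SimpleGraph W} (φ : A ≃g B)
    (v : V) : (A.neighborSet v).ncard = (B.neighborSet (φ v)).ncard := by
  rw [← Nat.card_coe_set_eq, ← Nat.card_coe_set_eq]
  exact Nat.card_congr (φ.mapNeighborSet v)

noncomputable def isoOfCert {n m : ℕ} {A : SimpleGraph (Fin n)} {B : SimpleGraph (Fin m)}
    (f : Fin n → Fin m) (hf : Function.Bijective f)
    (h : ∀ i j, A.Adj i j ↔ B.Adj (f i) (f j)) : A ≃g B where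
  toEquiv := Equiv.ofBijective f hf
  map_rel_iff' := fun {a b} => (h a b).symm

lemma nsbound {m : ℕ} (G : SimpleGraph (Fin m)) (v : Fin m) :
    (G.neighborSet v).ncard + 1 ≤ m := by
  have hsub : G.neighborSet v ⊆ {v}ᶜ := by
    intro w hw
    simp only [Set.mem_compl_iff, Set.mem_singleton_iff]
    rintro rfl
    exact G.irrefl hw
  have h1 : ({v} : Set (Fin m)).ncard + ({v}ᶜ : Set (Fin m)).ncard
      = Nat.card (Fin m) := Set.ncard_add_ncard_compl _
  rw [Set.ncard_singleton, Nat.card_eq_fintype_card, Fintype.card_fin] at h1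
  have h3 : (G.neighborSet v).ncard ≤ ({v}ᶜ : Set (Fin m)).ncard :=
    Set.ncard_le_ncard hsub (Set.toFinite _)
  omega

lemma ncard_ns_eq {n : ℕ} (G : SimpleGraph (Fin n)) [DecidableRel G.Adj] (v : Fin n) :
    (G.neighborSet v).ncard = (Finset.univ.filter fun w => G.Adj v w).card := by
  rw [← Set.ncard_coe_finset]
  congr 1
  ext w
  simp [SimpleGraph.mem_neighborSet]

/- canon -> Is3Tree, and canon for the explicit graphs -/

lemma is3tree_of_canon {n : ℕ} {G : SimpleGraph (Fin n)} (hn : 4 ≤ n) (hc : Canon G) :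
    Is3Tree G := by
  refine ⟨hn, 1, ?_, ?_⟩
  · simpa using hc.1
  · simpa using hc.2

lemma canon_bg {n : ℕ} {S : ℕ → Finset ℕ}
    (hrange : ∀ m, S m ⊆ Finset.range m)
    (hcard : ∀ m, 4 ≤ m → m < n → (S m).card = 3)
    (hclique : ∀ m, 4 ≤ m → m < n → ∀ a ∈ S m, ∀ b ∈ S m, a < b → (b < 4 ∨ a ∈ S b)) :
    Canon (bg n S) := by
  have hadj_lt : ∀ {i j : Fin n}, i < j → 4 ≤ (j : ℕ) →
      ((bg n S).Adj i j ↔ (i : ℕ) ∈ S (j : ℕ)) := by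
    intro i j hij h4
    have hij' : (i : ℕ) < j := hij
    rw [bg_adj]
    constructor
    · rintro ⟨hne, ⟨_, h | h⟩ | ⟨h, _⟩⟩
      · omega
      · exact h
      · omega
    · intro h
      exact ⟨Fin.ne_of_lt hij, Or.inl ⟨hij', Or.inr h⟩⟩
  constructor
  · intro i j hij h4
    exact bg_adj.mpr ⟨Fin.ne_of_lt hij, Or.inl ⟨hij, Or.inl h4⟩⟩
  · intro j h4
    constructor
    · have hset : {i : Fin n | i < j ∧ (bg n S).Adj i j}
          = ↑(Finset.univ.filter fun i : Fin n => i < j ∧ (bg n S).Adj i j) := by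
        simp
      rw [hset, Set.ncard_coe_finset]
      rw [← hcard (j : ℕ) h4 j.isLt]
      rw [← Finset.card_image_of_injective _ Fin.val_injective]
      congr 1
      ext m
      simp only [Finset.mem_image, Finset.mem_filter, Finset.mem_univ, true_and]
      constructor
      · rintro ⟨i, ⟨hlt, hadj⟩, rfl⟩
        exact (hadj_lt hlt h4).mp hadj
      · intro hm
        have hmj : m < (j : ℕ) := by simpa using hrange (j : ℕ) hm
        have hmn : m < n := lt_trans hmj j.isLt
        refine ⟨⟨m, hmn⟩, ⟨?_, ?_⟩, rfl⟩
        · exact hmj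
        · exact (hadj_lt (show (⟨m, hmn⟩ : Fin n) < j from hmj) h4).mpr hm
    · intro i i' hi hi' hne hadj hadj'
      have h1 : (i : ℕ) ∈ S (j : ℕ) := (hadj_lt hi h4).mp hadj
      have h2 : (i' : ℕ) ∈ S (j : ℕ) := (hadj_lt hi' h4).mp hadj'
      have hvne : (i : ℕ) ≠ (i' : ℕ) := fun h => hne (Fin.val_injective h)
      rcases Nat.lt_or_ge (i : ℕ) (i' : ℕ) with hlt | hge
      · rcases hclique (j : ℕ) h4 j.isLt _ h1 _ h2 hlt with h | h
        · exact bg_adj.mpr ⟨hne, Or.inl ⟨hlt, Or.inl h⟩⟩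
        · exact bg_adj.mpr ⟨hne, Or.inl ⟨hlt, Or.inr h⟩⟩
      · have hlt : (i' : ℕ) < i := by omega
        rcases hclique (j : ℕ) h4 j.isLt _ h2 _ h1 hlt with h | h
        · exact bg_adj.mpr ⟨hne, Or.inr ⟨hlt, Or.inl h⟩⟩
        · exact bg_adj.mpr ⟨hne, Or.inr ⟨hlt, Or.inr h⟩⟩

lemma classify {n : ℕ} (G : SimpleGraph (Fin n)) (hn : 4 ≤ n) (hc : Canon G)
    (hdeg : ∀ v, (G.neighborSet v).ncard ≤ 5) :
    Nonempty (G ≃g Ga) ∨ Nonempty (G ≃g Gb) ∨ Nonempty (G ≃g Gc) ∨ Nonempty (G ≃g Gd) := by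
  have hbr := bridge_eq hc
  set S := nbrS G with hS
  by_cases h4 : n = 4
  · subst h4
    left
    rw [hbr, ga_eq]
    exact ⟨RelIso.refl _⟩
  by_cases h5 : n = 5
  · subst h5
    right; left
    have hs : S 4 ∈ (Finset.range 4).powersetCard 3 :=
      Finset.mem_powersetCard.mpr ⟨nbrS_subset_range G 4, nbrS_card hc (le_refl 4) (by omega)⟩
    obtain ⟨hbij, hadj⟩ := L5 (S 4) hs
    have hcg : bg 5 S = bg 5 (fun m => if m = 4 then S 4 else ∅) := by
      apply bg_congr
      intro j hj1 hj2
      interval_cases j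
      simp
    rw [hbr, hcg, gb_eq]
    exact ⟨isoOfCert _ hbij hadj⟩
  by_cases h6 : n = 6
  · subst h6
    have hs : S 4 ∈ (Finset.range 4).powersetCard 3 :=
      Finset.mem_powersetCard.mpr ⟨nbrS_subset_range G 4, nbrS_card hc (by omega) (by omega)⟩
    have ht : S 5 ∈ (Finset.range 5).powersetCard 3 :=
      Finset.mem_powersetCard.mpr ⟨nbrS_subset_range G 5, nbrS_card hc (by omega) (by omega)⟩
    have hcliq : ∀ a ∈ S 5, ∀ b ∈ S 5, a < b → (b < 4 ∨ a ∈ S 4) := by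
      intro a ha b hb hab
      by_cases hb4 : b < 4
      · exact Or.inl hb4
      · have hb5 : b < 5 := by simpa using nbrS_subset_range G 5 hb
        have : b = 4 := by omega
        subst this
        rcases nbrS_clique hc (m := 5) (by omega) (by omega) a ha 4 hb hab with h | h
        · omega
        · exact Or.inr h
    obtain ⟨hbij, hadj⟩ := L6 (S 4) hs (S 5) ht hcliq
    have hcg : bg 6 S = bg 6 (fun m => if m = 4 then S 4 else if m = 5 then S 5 else ∅) := by
      apply bg_congr
      intro j hj1 hj2
      interval_cases j <;> simp
    cases hb : (cert6 (S 4) (S 5)).1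
    · right; right; right
      rw [hb] at hadj
      simp only [if_neg Bool.false_ne_true] at hadj
      rw [hbr, hcg, gd_eq]
      exact ⟨isoOfCert _ hbij hadj⟩
    · right; right; left
      rw [hb] at hadj
      simp only [if_pos rfl] at hadj
      rw [hbr, hcg, gc_eq]
      exact ⟨isoOfCert _ hbij hadj⟩
  -- n ≥ 7 : contradiction
  · exfalso
    have hn7 : 7 ≤ n := by omega
    have hs : S 4 ∈ (Finset.range 4).powersetCard 3 :=
      Finset.mem_powersetCard.mpr ⟨nbrS_subset_range G 4, nbrS_card hc (by omega) (by omega)⟩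
    have ht : S 5 ∈ (Finset.range 5).powersetCard 3 :=
      Finset.mem_powersetCard.mpr ⟨nbrS_subset_range G 5, nbrS_card hc (by omega) (by omega)⟩
    have hu : S 6 ∈ (Finset.range 6).powersetCard 3 :=
      Finset.mem_powersetCard.mpr ⟨nbrS_subset_range G 6, nbrS_card hc (by omega) (by omega)⟩
    have hcliq5 : ∀ a ∈ S 5, ∀ b ∈ S 5, a < b → (b < 4 ∨ a ∈ S 4) := by
      intro a ha b hb hab
      by_cases hb4 : b < 4
      · exact Or.inl hb4
      · have hb5 : b < 5 := by simpa using nbrS_subset_range G 5 hb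
        have : b = 4 := by omega
        subst this
        rcases nbrS_clique hc (m := 5) (by omega) (by omega) a ha 4 hb hab with h | h
        · omega
        · exact Or.inr h
    have hcliq6 : ∀ a ∈ S 6, ∀ b ∈ S 6, a < b →
        (b < 4 ∨ a ∈ (if b = 4 then S 4 else S 5)) := by
      intro a ha b hb hab
      by_cases hb4 : b < 4
      · exact Or.inl hb4
      · have hb6 : b < 6 := by simpa using nbrS_subset_range G 6 hb
        rcases nbrS_clique hc (by omega) (by omega) a ha b hb hab with h | h
        · omega
        · right
          have : b = 4 ∨ b = 5 := by omega
          rcases this with rfl | rfl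
          · simpa using h
          · simpa using h
    obtain ⟨v, hv⟩ := L7 (S 4) hs (S 5) ht (S 6) hu hcliq5 hcliq6
    set fS : ℕ → Finset ℕ := fun m => if m = 4 then S 4 else if m = 5 then S 5
        else if m = 6 then S 6 else ∅ with hfS
    have hfS_eq : ∀ m : ℕ, m < 7 → ¬ m < 4 → fS m = S m := by
      intro m hm7 hm4
      interval_cases m <;> simp [hfS]
    have htr : ∀ a b : Fin 7, (bg 7 fS).Adj a b ↔
        (bg n S).Adj (Fin.castLE hn7 a) (Fin.castLE hn7 b) := by
      intro a b
      rw [bg_adj, bg_adj]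
      have hne : a ≠ b ↔ Fin.castLE hn7 a ≠ Fin.castLE hn7 b := by
        constructor
        · intro h hh
          exact h (by simpa [Fin.ext_iff] using hh)
        · intro h hh
          exact h (by simpa [Fin.ext_iff] using hh)
      have hkey : ∀ x y : Fin 7, ((x : ℕ) < y ∧ ((y : ℕ) < 4 ∨ (x : ℕ) ∈ fS y)) ↔
          ((x : ℕ) < y ∧ ((y : ℕ) < 4 ∨ (x : ℕ) ∈ S (y : ℕ))) := by
        intro x y
        by_cases h4 : (y : ℕ) < 4
        · simp [h4]
        · rw [hfS_eq (y : ℕ) y.isLt h4]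
      simp only [Fin.coe_castLE]
      rw [← hne, hkey, hkey]
  -- now transfer degree
    have himg : Fin.castLE hn7 '' {w : Fin 7 | (bg 7 fS).Adj v w}
        ⊆ (bg n S).neighborSet (Fin.castLE hn7 v) := by
      rintro x ⟨w, hw, rfl⟩
      exact (htr v w).mp hw
    have h1 : ({w : Fin 7 | (bg 7 fS).Adj v w}).ncard
        = (Finset.univ.filter fun w => (bg 7 fS).Adj v w).card := by
      rw [← Set.ncard_coe_finset]
      congr 1
      ext w
      simp
    have h2 := Set.ncard_image_of_injective {w : Fin 7 | (bg 7 fS).Adj v w}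
      (Fin.castLE_injective hn7)
    have h3 := Set.ncard_le_ncard himg (Set.toFinite _)
    have h4 := hdeg (Fin.castLE hn7 v)
    rw [hbr] at h4
    omega

lemma canon_of_is3tree {n : ℕ} {G : SimpleGraph (Fin n)} (h : Is3Tree G) :
    ∃ G' : SimpleGraph (Fin n), Nonempty (G' ≃g G) ∧ Canon G' := by
  obtain ⟨hn, σ, h1, h2⟩ := h
  refine ⟨G.comap σ, ⟨⟨σ, Iff.rfl⟩⟩, ⟨?_, ?_⟩⟩
  · exact h1
  · exact h2

lemma canon_Ga : Canon Ga := by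
  constructor
  · intro i j hij _
    simp only [Ga, SimpleGraph.top_adj]
    exact Fin.ne_of_lt hij
  · intro j hj
    exact absurd j.isLt (by omega)

lemma sb_canon : Canon (bg 5 Sb) := by
  apply canon_bg
  · intro m
    unfold Sb
    split
    · subst ‹m = 4›; decide
    · simp
  · intro m h1 h2
    interval_cases m
    decide
  · intro m h1 h2
    interval_cases m
    decide

lemma sc_canon : Canon (bg 6 Sc) := by
  apply canon_bg
  · intro m
    unfold Sc
    split
    · subst ‹m = 4›; decide
    · split
      · subst ‹m = 5›; decide
      · simp
  · intro m h1 h2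
    interval_cases m <;> decide
  · intro m h1 h2
    interval_cases m <;> decide

lemma sd_canon : Canon (bg 6 Sd) := by
  apply canon_bg
  · intro m
    unfold Sd
    split
    · subst ‹m = 4›; decide
    · split
      · subst ‹m = 5›; decide
      · simp
  · intro m h1 h2
    interval_cases m <;> decide
  · intro m h1 h2
    interval_cases m <;> decide

lemma card_ne_no_iso {m k : ℕ} (A : SimpleGraph (Fin m)) (B : SimpleGraph (Fin k))
    (h : m ≠ k) : ¬Nonempty (A ≃g B) := by
  rintro ⟨φ⟩
  exact h (Fin.equiv_iff_eq.mp ⟨φ.toEquiv⟩)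

/-- the 3-trees of maximum degree at most 5 are exactly the four
graphs `K₄`, `K₅` minus an edge, and the two 6-vertex 3-trees obtained from
`K₅` minus an edge by adding a vertex joined to a triangle; moreover these four
graphs are pairwise non-isomorphic 3-trees of maximum degree at most 5. -/
theorem stmt11 :
    (∀ (n : ℕ) (G : SimpleGraph (Fin n)), Is3Tree G →
      (∀ v, (G.neighborSet v).ncard ≤ 5) →
      (Nonempty (G ≃g Ga) ∨ Nonempty (G ≃g Gb) ∨
       Nonempty (G ≃g Gc) ∨ Nonempty (G ≃g Gd))) ∧
    (Is3Tree Ga ∧ (∀ v, (Ga.neighborSet v).ncard ≤ 5)) ∧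
    (Is3Tree Gb ∧ (∀ v, (Gb.neighborSet v).ncard ≤ 5)) ∧
    (Is3Tree Gc ∧ (∀ v, (Gc.neighborSet v).ncard ≤ 5)) ∧
    (Is3Tree Gd ∧ (∀ v, (Gd.neighborSet v).ncard ≤ 5)) ∧
    (¬Nonempty (Ga ≃g Gb) ∧ ¬Nonempty (Ga ≃g Gc) ∧ ¬Nonempty (Ga ≃g Gd) ∧
     ¬Nonempty (Gb ≃g Gc) ∧ ¬Nonempty (Gb ≃g Gd) ∧ ¬Nonempty (Gc ≃g Gd)) := by
  refine ⟨?_, ⟨?_, ?_⟩, ⟨?_, ?_⟩, ⟨?_, ?_⟩, ⟨?_, ?_⟩, ?_, ?_, ?_, ?_, ?_, ?_⟩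
  · -- main classification
    intro n G hG hdeg
    obtain ⟨G', ⟨φ⟩, hc⟩ := canon_of_is3tree hG
    have hdeg' : ∀ v, (G'.neighborSet v).ncard ≤ 5 := by
      intro v
      rw [ncard_ns_iso φ v]
      exact hdeg _
    rcases classify G' hG.1 hc hdeg' with h | h | h | h
    · exact Or.inl ⟨φ.symm.trans h.some⟩
    · exact Or.inr (Or.inl ⟨φ.symm.trans h.some⟩)
    · exact Or.inr (Or.inr (Or.inl ⟨φ.symm.trans h.some⟩))
    · exact Or.inr (Or.inr (Or.inr ⟨φ.symm.trans h.some⟩))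
  · exact is3tree_of_canon (by norm_num) canon_Ga
  · intro v
    have := nsbound Ga v
    omega
  · rw [gb_eq]
    exact is3tree_of_canon (by norm_num) sb_canon
  · intro v
    have := nsbound Gb v
    omega
  · rw [gc_eq]
    exact is3tree_of_canon (by norm_num) sc_canon
  · intro v
    have := nsbound Gc v
    omega
  · rw [gd_eq]
    exact is3tree_of_canon (by norm_num) sd_canon
  · intro v
    have := nsbound Gd v
    omega
  · exact card_ne_no_iso _ _ (by norm_num)
  · exact card_ne_no_iso _ _ (by norm_num)
  · exact card_ne_no_iso _ _ (by norm_num)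
  · exact card_ne_no_iso _ _ (by norm_num)
  · exact card_ne_no_iso _ _ (by norm_num)
  · -- Gc vs Gd : degree sequences differ
    rintro ⟨φ⟩
    rw [gc_eq, gd_eq] at φ
    have hdeg : ∀ v, ((bg 6 Sc).neighborSet v).ncard = ((bg 6 Sd).neighborSet (φ v)).ncard :=
      ncard_ns_iso φ
    have hB : ∀ w : Fin 6, (Finset.univ.filter fun x => (bg 6 Sd).Adj w x).card = 5 →
        w = 0 ∨ w = 2 := by decide
    have hdeg5 : ∀ v : Fin 6, (Finset.univ.filter fun x => (bg 6 Sc).Adj v x).card = 5 →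
        φ v = 0 ∨ φ v = 2 := by
      intro v hv
      apply hB
      rw [← ncard_ns_eq, ← hdeg v, ncard_ns_eq]
      exact hv
    have e0 := hdeg5 0 (by decide)
    have e1 := hdeg5 1 (by decide)
    have e2 := hdeg5 2 (by decide)
    have key : ∀ a b : Fin 6, φ a = φ b → a = b := fun a b h => φ.toEquiv.injective h
    have hcol : (φ 0 = φ 1) ∨ (φ 0 = φ 2) ∨ (φ 1 = φ 2) := by
      rcases e0 with h0 | h0 <;> rcases e1 with h1 | h1 <;> rcases e2 with h2 | h2 <;>
        rw [h0, h1, h2] <;> decide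
    rcases hcol with h | h | h
    · exact absurd (key 0 1 h) (by decide)
    · exact absurd (key 0 2 h) (by decide)
    · exact absurd (key 1 2 h) (by decide)
end

section
/- The complete graph K4 is 3-edge-choosable, i.e. for every assignment of lists of size at least 3 to the edges of K4 there is a proper edge-colouring choosing each edge's colour from its list. -/
open SimpleGraph Sum

/-- The chromatic index of `G`: the least number of colours in a proper
edge-colouring. -/
noncomputable def chromIndex {V : Type*} (G : SimpleGraph V) : ℕ :=
  sInf {k | ∃ C : Sym2 V → ℕ, (∀ e ∈ G.edgeSet, C e < k) ∧
    ∀ e f, EdgeAdj G e f → C e ≠ C f}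

/-- `G` is `k`-edge-choosable. -/
def EdgeChoosable {V : Type*} (G : SimpleGraph V) (k : ℕ) : Prop :=
  ∀ L : Sym2 V → Finset ℕ, (∀ e ∈ G.edgeSet, k ≤ (L e).card) →
    ∃ C, IsListEdgeColoring G L C

/-- The list chromatic index of `G`. -/
noncomputable def listChromIndex {V : Type*} (G : SimpleGraph V) : ℕ :=
  sInf {k | EdgeChoosable G k}


lemma erase_card_ge {s : Finset ℕ} {x : ℕ} {n : ℕ} (h : n + 1 ≤ s.card) :
    n ≤ (s.erase x).card := by
  have := Finset.pred_card_le_card_erase (s := s) (a := x)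
  omega

lemma pick_one {s : Finset ℕ} (h : 1 ≤ s.card) : ∃ a, a ∈ s :=
  Finset.card_pos.mp h

/-- Lists version of 2-choosability of K₂,₂. -/
lemma c4lem (A B Cs D : Finset ℕ) (hA : 2 ≤ A.card) (hB : 2 ≤ B.card)
    (hC : 2 ≤ Cs.card) (hD : 2 ≤ D.card) :
    ∃ a b c d, a ∈ A ∧ b ∈ B ∧ c ∈ Cs ∧ d ∈ D ∧ a ≠ c ∧ a ≠ d ∧ b ≠ c ∧ b ≠ d := by
  by_cases hCD : (Cs ∩ D).Nonempty
  · obtain ⟨x, hx⟩ := hCD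
    have hxC := Finset.mem_of_mem_inter_left hx
    have hxD := Finset.mem_of_mem_inter_right hx
    obtain ⟨a, ha⟩ := pick_one (erase_card_ge (x := x) hA)
    obtain ⟨b, hb⟩ := pick_one (erase_card_ge (x := x) hB)
    exact ⟨a, b, x, x, Finset.mem_of_mem_erase ha, Finset.mem_of_mem_erase hb,
      hxC, hxD, Finset.ne_of_mem_erase ha, Finset.ne_of_mem_erase ha,
      Finset.ne_of_mem_erase hb, Finset.ne_of_mem_erase hb⟩
  · have hdisj : ∀ y, y ∈ Cs → y ∉ D := fun y hy hyD =>
      hCD ⟨y, Finset.mem_inter.mpr ⟨hy, hyD⟩⟩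
    obtain ⟨a, ha⟩ := pick_one (by omega : 1 ≤ A.card)
    obtain ⟨b, hb⟩ := pick_one (by omega : 1 ≤ B.card)
    by_cases hCs : Cs ⊆ ({a, b} : Finset ℕ)
    · have hcard : ({a, b} : Finset ℕ).card ≤ 2 := Finset.card_insert_le _ _ |>.trans (by simp)
      have hEq : Cs = ({a, b} : Finset ℕ) :=
        Finset.eq_of_subset_of_card_le hCs (le_trans hcard hC)
      have haC : a ∈ Cs := hEq ▸ Finset.mem_insert_self a _
      have hbC : b ∈ Cs := hEq ▸ Finset.mem_insert_of_mem (Finset.mem_singleton_self b)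
      have hab : a ≠ b := by
        intro h; rw [hEq, h] at hC; simp at hC
      obtain ⟨b', hb'⟩ := pick_one (erase_card_ge (x := b) hB)
      obtain ⟨d, hd⟩ := pick_one (erase_card_ge (x := b') hD)
      refine ⟨a, b', b, d, ha, Finset.mem_of_mem_erase hb', hbC,
        Finset.mem_of_mem_erase hd, hab, ?_, (Finset.ne_of_mem_erase hb').symm ∘ Eq.symm,
        fun h => Finset.ne_of_mem_erase hd h.symm⟩
      · intro h; exact hdisj a haC (h ▸ Finset.mem_of_mem_erase hd)
    · by_cases hDs : D ⊆ ({a, b} : Finset ℕ)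
      · have hcard : ({a, b} : Finset ℕ).card ≤ 2 := Finset.card_insert_le _ _ |>.trans (by simp)
        have hEq : D = ({a, b} : Finset ℕ) :=
          Finset.eq_of_subset_of_card_le hDs (le_trans hcard hD)
        have haD : a ∈ D := hEq ▸ Finset.mem_insert_self a _
        have hbD : b ∈ D := hEq ▸ Finset.mem_insert_of_mem (Finset.mem_singleton_self b)
        have hab : a ≠ b := by
          intro h; rw [hEq, h] at hD; simp at hD
        obtain ⟨b', hb'⟩ := pick_one (erase_card_ge (x := b) hB)
        obtain ⟨c, hc⟩ := pick_one (erase_card_ge (x := b') hC)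
        refine ⟨a, b', c, b, ha, Finset.mem_of_mem_erase hb', Finset.mem_of_mem_erase hc,
          hbD, ?_, hab, fun h => Finset.ne_of_mem_erase hc h.symm,
          Finset.ne_of_mem_erase hb'⟩
        · intro h; exact hdisj c (Finset.mem_of_mem_erase hc) (h ▸ haD)
      · obtain ⟨c, hc, hc'⟩ := Finset.not_subset.mp hCs
        obtain ⟨d, hd, hd'⟩ := Finset.not_subset.mp hDs
        simp only [Finset.mem_insert, Finset.mem_singleton, not_or] at hc' hd'
        exact ⟨a, b, c, d, ha, hb, hc, hd, fun h => hc'.1 h.symm, fun h => hd'.1 h.symm,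
          fun h => hc'.2 h.symm, fun h => hd'.2 h.symm⟩

lemma key (L1 L2 L3 L4 L5 L6 : Finset ℕ) (h1 : 3 ≤ L1.card) (h2 : 3 ≤ L2.card)
    (h3 : 3 ≤ L3.card) (h4 : 3 ≤ L4.card) (h5 : 3 ≤ L5.card) (h6 : 3 ≤ L6.card) :
    ∃ c1 c2 c3 c4 c5 c6, c1 ∈ L1 ∧ c2 ∈ L2 ∧ c3 ∈ L3 ∧ c4 ∈ L4 ∧ c5 ∈ L5 ∧ c6 ∈ L6 ∧
      c1 ≠ c3 ∧ c1 ≠ c4 ∧ c1 ≠ c5 ∧ c1 ≠ c6 ∧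
      c2 ≠ c3 ∧ c2 ≠ c4 ∧ c2 ≠ c5 ∧ c2 ≠ c6 ∧
      c3 ≠ c5 ∧ c3 ≠ c6 ∧ c4 ≠ c5 ∧ c4 ≠ c6 := by
  by_cases h12 : (L1 ∩ L2).Nonempty
  · obtain ⟨x, hx⟩ := h12
    obtain ⟨a, b, c, d, ha, hb, hc, hd, hac, had, hbc, hbd⟩ :=
      c4lem (L3.erase x) (L4.erase x) (L5.erase x) (L6.erase x)
        (erase_card_ge h3) (erase_card_ge h4) (erase_card_ge h5) (erase_card_ge h6)
    exact ⟨x, x, a, b, c, d, Finset.mem_of_mem_inter_left hx,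
      Finset.mem_of_mem_inter_right hx, Finset.mem_of_mem_erase ha,
      Finset.mem_of_mem_erase hb, Finset.mem_of_mem_erase hc, Finset.mem_of_mem_erase hd,
      fun h => Finset.ne_of_mem_erase ha h.symm, fun h => Finset.ne_of_mem_erase hb h.symm,
      fun h => Finset.ne_of_mem_erase hc h.symm, fun h => Finset.ne_of_mem_erase hd h.symm,
      fun h => Finset.ne_of_mem_erase ha h.symm, fun h => Finset.ne_of_mem_erase hb h.symm,
      fun h => Finset.ne_of_mem_erase hc h.symm, fun h => Finset.ne_of_mem_erase hd h.symm,
      hac, had, hbc, hbd⟩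
  · by_cases h34 : (L3 ∩ L4).Nonempty
    · obtain ⟨x, hx⟩ := h34
      obtain ⟨a, b, c, d, ha, hb, hc, hd, hac, had, hbc, hbd⟩ :=
        c4lem (L1.erase x) (L2.erase x) (L5.erase x) (L6.erase x)
          (erase_card_ge h1) (erase_card_ge h2) (erase_card_ge h5) (erase_card_ge h6)
      exact ⟨a, b, x, x, c, d, Finset.mem_of_mem_erase ha, Finset.mem_of_mem_erase hb,
        Finset.mem_of_mem_inter_left hx, Finset.mem_of_mem_inter_right hx,
        Finset.mem_of_mem_erase hc, Finset.mem_of_mem_erase hd,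
        Finset.ne_of_mem_erase ha, Finset.ne_of_mem_erase ha, hac, had,
        Finset.ne_of_mem_erase hb, Finset.ne_of_mem_erase hb, hbc, hbd,
        fun h => Finset.ne_of_mem_erase hc h.symm, fun h => Finset.ne_of_mem_erase hd h.symm,
        fun h => Finset.ne_of_mem_erase hc h.symm, fun h => Finset.ne_of_mem_erase hd h.symm⟩
    · by_cases h56 : (L5 ∩ L6).Nonempty
      · obtain ⟨x, hx⟩ := h56
        obtain ⟨a, b, c, d, ha, hb, hc, hd, hac, had, hbc, hbd⟩ :=
          c4lem (L1.erase x) (L2.erase x) (L3.erase x) (L4.erase x)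
            (erase_card_ge h1) (erase_card_ge h2) (erase_card_ge h3) (erase_card_ge h4)
        exact ⟨a, b, c, d, x, x, Finset.mem_of_mem_erase ha, Finset.mem_of_mem_erase hb,
          Finset.mem_of_mem_erase hc, Finset.mem_of_mem_erase hd,
          Finset.mem_of_mem_inter_left hx, Finset.mem_of_mem_inter_right hx,
          hac, had, Finset.ne_of_mem_erase ha, Finset.ne_of_mem_erase ha,
          hbc, hbd, Finset.ne_of_mem_erase hb, Finset.ne_of_mem_erase hb,
          Finset.ne_of_mem_erase hc, Finset.ne_of_mem_erase hc,
          Finset.ne_of_mem_erase hd, Finset.ne_of_mem_erase hd⟩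
      · -- all three pairs disjoint: Hall's theorem
        set t : Fin 6 → Finset ℕ := ![L1, L2, L3, L4, L5, L6] with ht
        have hcards : ∀ i, 3 ≤ (t i).card := by
          intro i; fin_cases i <;> simpa [ht] using ‹_›
        have hdisj : ∀ {i j : Fin 6}, (i = 0 ∧ j = 1) ∨ (i = 2 ∧ j = 3) ∨ (i = 4 ∧ j = 5) →
            Disjoint (t i) (t j) := by
          rintro i j (⟨rfl, rfl⟩ | ⟨rfl, rfl⟩ | ⟨rfl, rfl⟩) <;>
            rw [Finset.disjoint_iff_inter_eq_empty] <;>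
            simpa [ht] using Finset.not_nonempty_iff_eq_empty.mp ‹_›
        have pigeon : ∀ s : Finset (Fin 6), 4 ≤ s.card →
            ((0:Fin 6) ∈ s ∧ (1:Fin 6) ∈ s) ∨ ((2:Fin 6) ∈ s ∧ (3:Fin 6) ∈ s) ∨
            ((4:Fin 6) ∈ s ∧ (5:Fin 6) ∈ s) := by decide
        have hall : ∀ s : Finset (Fin 6), s.card ≤ (s.biUnion t).card := by
          intro s
          rcases s.eq_empty_or_nonempty with rfl | ⟨i, hi⟩
          · simp
          have step : ∀ i j : Fin 6, i ∈ s → j ∈ s → Disjoint (t i) (t j) →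
              s.card ≤ (s.biUnion t).card := by
            intro i j hi hj hd
            have hsub : t i ∪ t j ⊆ s.biUnion t :=
              Finset.union_subset (Finset.subset_biUnion_of_mem t hi)
                (Finset.subset_biUnion_of_mem t hj)
            have h1 := Finset.card_le_card hsub
            rw [Finset.card_union_of_disjoint hd] at h1
            have hs6 : s.card ≤ 6 := by simpa using Finset.card_le_univ s
            have := hcards i; have := hcards j; omega
          by_cases h4c : 4 ≤ s.card
          · rcases pigeon s h4c with ⟨hi0, hi1⟩ | ⟨hi2, hi3⟩ | ⟨hi4, hi5⟩
            · exact step 0 1 hi0 hi1 (hdisj (Or.inl ⟨rfl, rfl⟩))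
            · exact step 2 3 hi2 hi3 (hdisj (Or.inr (Or.inl ⟨rfl, rfl⟩)))
            · exact step 4 5 hi4 hi5 (hdisj (Or.inr (Or.inr ⟨rfl, rfl⟩)))
          · have hsub : t i ⊆ s.biUnion t := Finset.subset_biUnion_of_mem t hi
            have := Finset.card_le_card hsub
            have := hcards i; omega
        obtain ⟨f, hinj, hf⟩ := (Finset.all_card_le_biUnion_card_iff_exists_injective t).mp hall
        have m : ∀ i, f i ∈ t i := hf
        refine ⟨f 0, f 1, f 2, f 3, f 4, f 5, ?_, ?_, ?_, ?_, ?_, ?_,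
          ?_, ?_, ?_, ?_, ?_, ?_, ?_, ?_, ?_, ?_, ?_, ?_⟩
        · simpa [ht] using m 0
        · simpa [ht] using m 1
        · simpa [ht] using m 2
        · simpa [ht] using m 3
        · simpa [ht] using m 4
        · simpa [ht] using m 5
        all_goals exact fun h => (by decide : ¬ _) (hinj h)

/-- `K₄` is 3-edge-choosable. -/
theorem stmt13 : EdgeChoosable (⊤ : SimpleGraph (Fin 4)) 3 := by
  intro L hL
  have hmem : ∀ a b : Fin 4, a ≠ b → s(a, b) ∈ (⊤ : SimpleGraph (Fin 4)).edgeSet :=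
    fun a b h => by simpa using h
  obtain ⟨c1, c2, c3, c4, c5, c6, m1, m2, m3, m4, m5, m6,
      h13, h14, h15, h16, h23, h24, h25, h26, h35, h36, h45, h46⟩ :=
    key (L s(0,1)) (L s(2,3)) (L s(0,2)) (L s(1,3)) (L s(0,3)) (L s(1,2))
      (hL _ (hmem 0 1 (by decide))) (hL _ (hmem 2 3 (by decide)))
      (hL _ (hmem 0 2 (by decide))) (hL _ (hmem 1 3 (by decide)))
      (hL _ (hmem 0 3 (by decide))) (hL _ (hmem 1 2 (by decide)))
  set Cf : Sym2 (Fin 4) → ℕ := fun e =>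
    if e = s(0,1) then c1 else if e = s(2,3) then c2 else if e = s(0,2) then c3
    else if e = s(1,3) then c4 else if e = s(0,3) then c5 else c6 with hCf
  have E1 : Cf s(0,1) = c1 := by simp [hCf]
  have E2 : Cf s(2,3) = c2 := by simp [hCf]
  have E3 : Cf s(0,2) = c3 := by simp [hCf]
  have E4 : Cf s(1,3) = c4 := by simp [hCf]
  have E5 : Cf s(0,3) = c5 := by simp [hCf]
  have E6 : Cf s(1,2) = c6 := by simp [hCf]
  have henum : ∀ e ∈ (⊤ : SimpleGraph (Fin 4)).edgeSet,
      e = s(0,1) ∨ e = s(2,3) ∨ e = s(0,2) ∨ e = s(1,3) ∨ e = s(0,3) ∨ e = s(1,2) := by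
    intro e
    induction e using Sym2.ind with
    | _ a b =>
      rw [SimpleGraph.mem_edgeSet, SimpleGraph.top_adj]
      revert a b
      decide
  refine ⟨Cf, ?_, ?_⟩
  · intro e he
    rcases henum e he with rfl | rfl | rfl | rfl | rfl | rfl <;>
      simp only [E1, E2, E3, E4, E5, E6] <;> assumption
  · rintro e f ⟨he, hf, hne, hv⟩
    rcases henum e he with rfl | rfl | rfl | rfl | rfl | rfl <;>
      rcases henum f hf with rfl | rfl | rfl | rfl | rfl | rfl <;>
      first
        | exact absurd rfl hne
        | exact absurd hv (by decide)
        | (simp only [E1, E2, E3, E4, E5, E6]; omega)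
end
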